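/- Let n ≥ 2, 1 < s < ∞ and 0 < α < n/s. Let σ be a nonnegative Borel measure on ℝ^n satisfying σ(B(x,r)) ≤ C · r^{n−αs} for all balls B(x,r), for some constant C > 0. Then there exists a constant C' = C'(n, α, s, C) > 0 such that for all x ∈ ℝ^n, all t > 0, and all y ∈ B(x,t): | ∫_t^∞ [ (σ(B(x,r))/r^{n−αs})^{1/(s−1)} − (σ(B(y,r))/r^{n−αs})^{1/(s−1)} ] dr/r | ≤ C'. -/

import Mathlib

open MeasureTheory Metric Set ENNReal

noncomputable section

/-- ε-trick: for `q ∈ (0,1]`, `d^q ≤ ε^q + ε^(q-1) * d`. -/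
lemma aux_eps {q d ε : ℝ} (hq0 : 0 < q) (hq1 : q ≤ 1) (hd : 0 ≤ d) (hε : 0 < ε) :
    d ^ q ≤ ε ^ q + ε ^ (q - 1) * d := by
  rcases le_or_gt d ε with h | h
  · have h1 : d ^ q ≤ ε ^ q := Real.rpow_le_rpow hd h hq0.le
    have h2 : 0 ≤ ε ^ (q - 1) * d := by positivity
    linarith
  · have hd0 : 0 < d := hε.trans h
    have h1 : d ^ q = d ^ (q - 1) * d := by
      rw [← Real.rpow_add_one hd0.ne' (q - 1), sub_add_cancel]
    have h2 : d ^ (q - 1) ≤ ε ^ (q - 1) :=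
      Real.rpow_le_rpow_of_nonpos hε h.le (by linarith)
    have h3 : d ^ (q - 1) * d ≤ ε ^ (q - 1) * d :=
      mul_le_mul_of_nonneg_right h2 hd
    have h4 : 0 ≤ ε ^ q := by positivity
    linarith

/-- subadditivity of `x ↦ x^p` for `p ∈ (0,1]`, in difference form. -/
lemma aux_sub_rpow {p : ℝ} (hp0 : 0 < p) (hp1 : p ≤ 1) {a b : ℝ} (hb : 0 ≤ b) (hba : b ≤ a) :
    a ^ p - b ^ p ≤ (a - b) ^ p := by
  have ha : 0 ≤ a := hb.trans hba
  have h := NNReal.rpow_add_le_add_rpow (Real.toNNReal (a - b)) (Real.toNNReal b) hp0.le hp1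
  have hsum : Real.toNNReal (a - b) + Real.toNNReal b = Real.toNNReal a := by
    rw [← Real.toNNReal_add (by linarith) hb, sub_add_cancel]
  rw [hsum] at h
  have h2 := NNReal.coe_le_coe.2 h
  push_cast at h2
  simp only [Real.coe_toNNReal _ ha, Real.coe_toNNReal _ hb,
    Real.coe_toNNReal _ (by linarith : (0:ℝ) ≤ a - b)] at h2
  linarith

/-- Hölder-type bound on the difference of `p`-th powers. -/
lemma aux_rpow_diff {p Cb : ℝ} (hp : 0 < p) (hCb : 0 < Cb) (a b : ℝ)
    (ha : 0 ≤ a) (hb : 0 ≤ b) (haC : a ≤ Cb) (hbC : b ≤ Cb) :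
    |a ^ p - b ^ p| ≤ (1 + p * Cb ^ (p - 1)) * |a - b| ^ (min p 1) := by
  have hM1 : (1:ℝ) ≤ 1 + p * Cb ^ (p - 1) := by
    have : 0 ≤ p * Cb ^ (p - 1) := by positivity
    linarith
  rcases le_or_gt p 1 with hp1 | hp1
  · rw [min_eq_left hp1]
    -- wlog b ≤ a
    have key : ∀ u v : ℝ, 0 ≤ v → v ≤ u → u ≤ Cb → u ^ p - v ^ p ≤
        (1 + p * Cb ^ (p - 1)) * |u - v| ^ p := by
      intro u v hv hvu huC
      have h1 : u ^ p - v ^ p ≤ (u - v) ^ p := aux_sub_rpow hp hp1 hv hvu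
      have h2 : (u - v) ^ p = |u - v| ^ p := by rw [abs_of_nonneg (by linarith)]
      have h3 : |u - v| ^ p ≤ (1 + p * Cb ^ (p - 1)) * |u - v| ^ p :=
        le_mul_of_one_le_left (by positivity) hM1
      linarith
    rcases le_total b a with hba | hab
    · have hle : b ^ p ≤ a ^ p := Real.rpow_le_rpow hb hba hp.le
      rw [abs_of_nonneg (by linarith)]
      exact key a b hb hba haC
    · have hle : a ^ p ≤ b ^ p := Real.rpow_le_rpow ha hab hp.le
      rw [abs_of_nonpos (by linarith), neg_sub, abs_sub_comm]
      exact key b a ha hab hbC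
  · rw [min_eq_right hp1.le, Real.rpow_one]
    have hderiv : ∀ z ∈ Icc (0:ℝ) Cb,
        HasDerivWithinAt (fun x : ℝ => x ^ p) (p * z ^ (p - 1)) (Icc 0 Cb) z := by
      intro z _
      exact (Real.hasDerivAt_rpow_const (Or.inr hp1.le)).hasDerivWithinAt
    have hbound : ∀ z ∈ Icc (0:ℝ) Cb, ‖p * z ^ (p - 1)‖ ≤ p * Cb ^ (p - 1) := by
      intro z hz
      rw [Real.norm_eq_abs, abs_of_nonneg (mul_nonneg hp.le (Real.rpow_nonneg hz.1 _))]
      have : z ^ (p - 1) ≤ Cb ^ (p - 1) := Real.rpow_le_rpow hz.1 hz.2 (by linarith)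
      nlinarith
    have := (convex_Icc (0:ℝ) Cb).norm_image_sub_le_of_norm_hasDerivWithin_le
      hderiv hbound ⟨hb, hbC⟩ ⟨ha, haC⟩
    rw [Real.norm_eq_abs, Real.norm_eq_abs] at this
    have h2 : p * Cb ^ (p - 1) * |a - b| ≤ (1 + p * Cb ^ (p - 1)) * |a - b| :=
      mul_le_mul_of_nonneg_right (by linarith) (abs_nonneg _)
    linarith

/-- Annulus integral bound for a nonnegative monotone function. -/
lemma aux_annulus {μ : ℝ → ℝ} (hmono : Monotone μ) (hpos : ∀ r, 0 ≤ μ r)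
    {t A : ℝ} (ht : 0 < t) (hA : t ≤ A) :
    ∫ r in Ioc A (2*A), (μ (r + t) - μ (r - t)) ≤ 2 * t * μ (2*A + t) := by
  have hA0 : 0 < A := ht.trans_le hA
  have h2A : A ≤ 2 * A := by linarith
  have hint : ∀ a b : ℝ, IntervalIntegrable μ volume a b := fun a b =>
    hmono.intervalIntegrable
  have m1 : Monotone fun r : ℝ => μ (r + t) := fun u v huv => hmono (by linarith)
  have m2 : Monotone fun r : ℝ => μ (r - t) := fun u v huv => hmono (by linarith)
  rw [← intervalIntegral.integral_of_le h2A]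
  rw [intervalIntegral.integral_sub m1.intervalIntegrable m2.intervalIntegrable]
  rw [intervalIntegral.integral_comp_add_right (fun r => μ r) t,
    intervalIntegral.integral_comp_sub_right (fun r => μ r) t]
  have h1 := intervalIntegral.integral_add_adjacent_intervals
    (hint (A - t) (A + t)) (hint (A + t) (2*A + t))
  have h2 := intervalIntegral.integral_add_adjacent_intervals
    (hint (A - t) (2*A - t)) (hint (2*A - t) (2*A + t))
  have hb1 : ∫ u in (2*A - t)..(2*A + t), μ u ≤ 2 * t * μ (2*A + t) := by
    have hle : 2*A - t ≤ 2*A + t := by linarith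
    have := intervalIntegral.integral_mono_on hle (hint _ _)
      (intervalIntegrable_const (c := μ (2*A + t)))
      (fun u hu => hmono hu.2)
    rw [intervalIntegral.integral_const, smul_eq_mul] at this
    calc ∫ u in (2*A - t)..(2*A + t), μ u ≤ (2*A + t - (2*A - t)) * μ (2*A + t) := this
      _ = 2 * t * μ (2*A + t) := by ring
  have hb2 : 0 ≤ ∫ u in (A - t)..(A + t), μ u :=
    intervalIntegral.integral_nonneg (by linarith) (fun u _ => hpos u)
  linarith

/-- Per-dyadic-interval bound. -/
lemma aux_key {β p q C M : ℝ} (hβ : 0 < β) (hp : 0 < p) (hC : 0 < C)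
    (hq0 : 0 < q) (hq1 : q ≤ 1) (hM0 : 0 < M)
    (hM : ∀ a b : ℝ, 0 ≤ a → 0 ≤ b → a ≤ C → b ≤ C →
      |a ^ p - b ^ p| ≤ M * |a - b| ^ q)
    {μ ν : ℝ → ℝ} (hμm : Monotone μ) (hμ0 : ∀ r, 0 ≤ μ r)
    (hμC : ∀ r, 0 < r → μ r ≤ C * r ^ β) (hνC : ∀ r, 0 < r → ν r ≤ C * r ^ β)
    (hν0 : ∀ r, 0 ≤ ν r)
    {t A : ℝ} (ht : 0 < t) (hA : t ≤ A)
    (hd : ∀ r, A < r → |ν r - μ r| ≤ μ (r + t) - μ (r - t)) :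
    ∫⁻ r in Ioc A (2*A), ENNReal.ofReal ‖((ν r / r ^ β) ^ p - (μ r / r ^ β) ^ p) * (1/r)‖
      ≤ ENNReal.ofReal ((2 * M * (2 * C * 3 ^ β) ^ q) * (t/A) ^ q) := by
  have hA0 : 0 < A := ht.trans_le hA
  set ε : ℝ := (2 * C * 3 ^ β) * (t * A ^ (β - 1)) with hεdef
  have hε : 0 < ε := by positivity
  set W : ℝ := M * (A ^ (β * q) * A)⁻¹ with hWdef
  have hW0 : 0 < W := by positivity
  set D : ℝ → ℝ := fun r => μ (r + t) - μ (r - t) with hDdef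
  have hD0 : ∀ r, 0 ≤ D r := fun r => sub_nonneg.2 (hμm (by linarith))
  have hDmeas : Measurable D := by
    have h1 : Monotone fun r : ℝ => μ (r + t) := fun u v huv => hμm (by linarith)
    have h2 : Monotone fun r : ℝ => μ (r - t) := fun u v huv => hμm (by linarith)
    exact h1.measurable.sub h2.measurable
  -- pointwise bound
  have hpt : ∀ r ∈ Ioc A (2*A),
      ENNReal.ofReal ‖((ν r / r ^ β) ^ p - (μ r / r ^ β) ^ p) * (1/r)‖
        ≤ ENNReal.ofReal (W * (ε ^ q + ε ^ (q - 1) * D r)) := by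
    intro r hr
    apply ENNReal.ofReal_le_ofReal
    have hr0 : 0 < r := hA0.trans hr.1
    have hrβ : 0 < r ^ β := Real.rpow_pos_of_pos hr0 β
    have habs : ‖((ν r / r ^ β) ^ p - (μ r / r ^ β) ^ p) * (1/r)‖
        = |(ν r / r ^ β) ^ p - (μ r / r ^ β) ^ p| * (1/r) := by
      rw [Real.norm_eq_abs, abs_mul, abs_of_pos (by positivity : (0:ℝ) < 1/r)]
    have h1 : |(ν r / r ^ β) ^ p - (μ r / r ^ β) ^ p|
        ≤ M * |ν r / r ^ β - μ r / r ^ β| ^ q := by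
      refine hM _ _ (div_nonneg (hν0 r) hrβ.le) (div_nonneg (hμ0 r) hrβ.le) ?_ ?_
      · rw [div_le_iff₀ hrβ]; exact hνC r hr0
      · rw [div_le_iff₀ hrβ]; exact hμC r hr0
    have h2 : |ν r / r ^ β - μ r / r ^ β| = |ν r - μ r| / r ^ β := by
      rw [div_sub_div_same, abs_div, abs_of_pos hrβ]
    have h3 : |ν r / r ^ β - μ r / r ^ β| ≤ D r / r ^ β := by
      rw [h2]
      gcongr
      exact hd r hr.1
    have h4 : |ν r / r ^ β - μ r / r ^ β| ^ q ≤ (D r / r ^ β) ^ q :=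
      Real.rpow_le_rpow (abs_nonneg _) h3 hq0.le
    have h5 : (D r / r ^ β) ^ q = (D r) ^ q / r ^ (β * q) := by
      rw [Real.div_rpow (hD0 r) hrβ.le, ← Real.rpow_mul hr0.le]
    have h6 : (D r) ^ q ≤ ε ^ q + ε ^ (q - 1) * D r := aux_eps hq0 hq1 (hD0 r) hε
    have hrq : 0 < r ^ (β * q) := Real.rpow_pos_of_pos hr0 _
    have h7 : |(ν r / r ^ β) ^ p - (μ r / r ^ β) ^ p| * (1/r)
        ≤ M * ((ε ^ q + ε ^ (q - 1) * D r) / r ^ (β * q)) * (1/r) := by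
      refine mul_le_mul_of_nonneg_right ?_ (by positivity)
      calc |(ν r / r ^ β) ^ p - (μ r / r ^ β) ^ p|
          ≤ M * |ν r / r ^ β - μ r / r ^ β| ^ q := h1
        _ ≤ M * ((D r) ^ q / r ^ (β * q)) := by
            rw [← h5]; exact mul_le_mul_of_nonneg_left h4 hM0.le
        _ ≤ M * ((ε ^ q + ε ^ (q - 1) * D r) / r ^ (β * q)) := by
            refine mul_le_mul_of_nonneg_left ?_ hM0.le
            gcongr
    have h8 : M * ((ε ^ q + ε ^ (q - 1) * D r) / r ^ (β * q)) * (1/r)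
        = M * (ε ^ q + ε ^ (q - 1) * D r) * (r ^ (β * q) * r)⁻¹ := by
      field_simp
    have h9 : (r ^ (β * q) * r)⁻¹ ≤ (A ^ (β * q) * A)⁻¹ := by
      have hAq : A ^ (β * q) ≤ r ^ (β * q) :=
        Real.rpow_le_rpow hA0.le hr.1.le (by positivity)
      have : A ^ (β * q) * A ≤ r ^ (β * q) * r := by
        have hAr : A ≤ r := hr.1.le
        have h0 : 0 < A ^ (β * q) := Real.rpow_pos_of_pos hA0 _
        nlinarith
      exact inv_anti₀ (by positivity) this
    have h10 : M * (ε ^ q + ε ^ (q - 1) * D r) * (r ^ (β * q) * r)⁻¹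
        ≤ M * (ε ^ q + ε ^ (q - 1) * D r) * (A ^ (β * q) * A)⁻¹ := by
      refine mul_le_mul_of_nonneg_left h9 ?_
      have h1' : (0:ℝ) ≤ ε ^ q := by positivity
      have h2' : (0:ℝ) ≤ ε ^ (q - 1) * D r := mul_nonneg (by positivity) (hD0 r)
      positivity
    have h11 : M * (ε ^ q + ε ^ (q - 1) * D r) * (A ^ (β * q) * A)⁻¹
        = W * (ε ^ q + ε ^ (q - 1) * D r) := by rw [hWdef]; ring
    rw [habs]
    calc |(ν r / r ^ β) ^ p - (μ r / r ^ β) ^ p| * (1/r)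
        ≤ M * ((ε ^ q + ε ^ (q - 1) * D r) / r ^ (β * q)) * (1/r) := h7
      _ = M * (ε ^ q + ε ^ (q - 1) * D r) * (r ^ (β * q) * r)⁻¹ := h8
      _ ≤ M * (ε ^ q + ε ^ (q - 1) * D r) * (A ^ (β * q) * A)⁻¹ := h10
      _ = W * (ε ^ q + ε ^ (q - 1) * D r) := h11
  -- integrate the bound
  have h2A : A ≤ 2 * A := by linarith
  have hDint : IntegrableOn D (Ioc A (2*A)) volume := by
    have m1 : Monotone fun r : ℝ => μ (r + t) := fun u v huv => hμm (by linarith)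
    have m2 : Monotone fun r : ℝ => μ (r - t) := fun u v huv => hμm (by linarith)
    exact (intervalIntegrable_iff_integrableOn_Ioc_of_le h2A).1
      (m1.intervalIntegrable.sub m2.intervalIntegrable)
  have hbint : IntegrableOn (fun r => W * (ε ^ q + ε ^ (q - 1) * D r)) (Ioc A (2*A)) volume := by
    refine Integrable.const_mul ?_ W
    exact (integrableOn_const measure_Ioc_lt_top.ne).add (hDint.const_mul _)
  have step1 : ∫⁻ r in Ioc A (2*A),
      ENNReal.ofReal ‖((ν r / r ^ β) ^ p - (μ r / r ^ β) ^ p) * (1/r)‖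
      ≤ ∫⁻ r in Ioc A (2*A), ENNReal.ofReal (W * (ε ^ q + ε ^ (q - 1) * D r)) :=
    setLIntegral_mono (ENNReal.measurable_ofReal.comp
      ((measurable_const.add (hDmeas.const_mul (ε ^ (q - 1)))).const_mul W)) hpt
  have step2 : ∫⁻ r in Ioc A (2*A), ENNReal.ofReal (W * (ε ^ q + ε ^ (q - 1) * D r))
      = ENNReal.ofReal (∫ r in Ioc A (2*A), W * (ε ^ q + ε ^ (q - 1) * D r)) := by
    rw [← ofReal_integral_eq_lintegral_ofReal hbint]
    filter_upwards with r
    have : 0 ≤ ε ^ (q - 1) * D r := mul_nonneg (by positivity) (hD0 r)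
    have h1' : (0:ℝ) ≤ ε ^ q := by positivity
    positivity
  -- compute/bound the real integral
  have hvol : (volume (Ioc A (2*A))).toReal = A := by
    rw [Real.volume_Ioc, ENNReal.toReal_ofReal (by linarith)]
    ring
  have hDle : ∫ r in Ioc A (2*A), D r ≤ 2 * t * μ (2*A + t) :=
    aux_annulus hμm hμ0 ht hA
  have hμtop : μ (2*A + t) ≤ C * 3 ^ β * A ^ β := by
    have h1' : μ (2*A + t) ≤ C * (2*A + t) ^ β := hμC _ (by linarith)
    have h2' : (2*A + t) ^ β ≤ (3*A) ^ β :=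
      Real.rpow_le_rpow (by linarith) (by linarith) hβ.le
    have h3' : (3*A : ℝ) ^ β = 3 ^ β * A ^ β :=
      Real.mul_rpow (by norm_num) hA0.le
    nlinarith [Real.rpow_pos_of_pos (show (0:ℝ) < 3*A by linarith) β]
  have hεA : ε * A = 2 * t * (C * 3 ^ β * A ^ β) := by
    have : A ^ (β - 1) * A = A ^ β := by
      rw [← Real.rpow_add_one hA0.ne' (β - 1), sub_add_cancel]
    rw [hεdef]
    linear_combination (2 * t * (C * 3 ^ β)) * this
  have hεq : ε ^ (q - 1) * ε = ε ^ q := by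
    rw [← Real.rpow_add_one hε.ne' (q - 1), sub_add_cancel]
  have hint_eq : ∫ r in Ioc A (2*A), W * (ε ^ q + ε ^ (q - 1) * D r)
      = W * (ε ^ q * A + ε ^ (q - 1) * ∫ r in Ioc A (2*A), D r) := by
    rw [integral_const_mul]
    congr 1
    rw [integral_add (by exact integrableOn_const measure_Ioc_lt_top.ne) (hDint.const_mul _),
      setIntegral_const, integral_const_mul, Measure.real, hvol, smul_eq_mul]
    ring
  have hfinal : ∫ r in Ioc A (2*A), W * (ε ^ q + ε ^ (q - 1) * D r)
      ≤ (2 * M * (2 * C * 3 ^ β) ^ q) * (t/A) ^ q := by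
    rw [hint_eq]
    have hDint2 : ε ^ (q - 1) * ∫ r in Ioc A (2*A), D r ≤ ε ^ (q - 1) * (2 * t * μ (2*A + t)) :=
      mul_le_mul_of_nonneg_left hDle (by positivity)
    have hDint3 : ε ^ (q - 1) * (2 * t * μ (2*A + t))
        ≤ ε ^ (q - 1) * (2 * t * (C * 3 ^ β * A ^ β)) := by
      refine mul_le_mul_of_nonneg_left ?_ (by positivity)
      nlinarith
    have h12 : ε ^ (q - 1) * (2 * t * (C * 3 ^ β * A ^ β)) = ε ^ q * A := by
      rw [← hεA, ← hεq]; ring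
    have hbd : W * (ε ^ q * A + ε ^ (q - 1) * ∫ r in Ioc A (2*A), D r)
        ≤ W * (2 * (ε ^ q * A)) := by
      refine mul_le_mul_of_nonneg_left ?_ hW0.le
      linarith
    refine hbd.trans (le_of_eq ?_)
    -- the exact computation
    have hεqval : ε ^ q = (2 * C * 3 ^ β) ^ q * (t ^ q * A ^ ((β - 1) * q)) := by
      rw [hεdef, Real.mul_rpow (by positivity) (by positivity),
        Real.mul_rpow ht.le (by positivity), ← Real.rpow_mul hA0.le]
    have hAsplit : A ^ ((β - 1) * q) = A ^ (β * q) / A ^ q := by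
      rw [show (β - 1) * q = β * q - q by ring, Real.rpow_sub hA0]
    have htA : (t/A) ^ q = t ^ q / A ^ q := Real.div_rpow ht.le hA0.le q
    rw [hWdef, hεqval, hAsplit, htA]
    have h0 : A ^ (β * q) ≠ 0 := (Real.rpow_pos_of_pos hA0 _).ne'
    have hAne : A ≠ 0 := hA0.ne'
    have hq : A ^ q ≠ 0 := (Real.rpow_pos_of_pos hA0 _).ne'
    field_simp
  calc ∫⁻ r in Ioc A (2*A),
      ENNReal.ofReal ‖((ν r / r ^ β) ^ p - (μ r / r ^ β) ^ p) * (1/r)‖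
      ≤ ∫⁻ r in Ioc A (2*A), ENNReal.ofReal (W * (ε ^ q + ε ^ (q - 1) * D r)) := step1
    _ = ENNReal.ofReal (∫ r in Ioc A (2*A), W * (ε ^ q + ε ^ (q - 1) * D r)) := step2
    _ ≤ ENNReal.ofReal ((2 * M * (2 * C * 3 ^ β) ^ q) * (t/A) ^ q) :=
        ENNReal.ofReal_le_ofReal hfinal

/-- Appendix A of the paper: a tail estimate for nonlinear potentials. -/
theorem stmt11 (n : ℕ) (hn : 2 ≤ n) (s α : ℝ) (hs : 1 < s) (hα : 0 < α) (hαs : α < n / s)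
    (σ : Measure (EuclideanSpace ℝ (Fin n))) (C : ℝ) (hC : 0 < C)
    (hball : ∀ (x : EuclideanSpace ℝ (Fin n)) (r : ℝ), 0 < r →
      σ (ball x r) ≤ ENNReal.ofReal (C * r ^ ((n : ℝ) - α * s))) :
    ∃ C' : ℝ, 0 < C' ∧
      ∀ (x y : EuclideanSpace ℝ (Fin n)) (t : ℝ), 0 < t → y ∈ ball x t →
        |∫ r in Ioi t,
            (((σ (ball x r)).toReal / r ^ ((n : ℝ) - α * s)) ^ (1 / (s - 1)) -
              ((σ (ball y r)).toReal / r ^ ((n : ℝ) - α * s)) ^ (1 / (s - 1))) * (1 / r)|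
          ≤ C' := by
  have hs0 : 0 < s := lt_trans one_pos hs
  set β : ℝ := (n : ℝ) - α * s with hβdef
  have hβ : 0 < β := by
    have : α * s < n := by
      have := (lt_div_iff₀ hs0).1 hαs
      linarith
    simp only [hβdef]; linarith
  set p : ℝ := 1 / (s - 1) with hpdef
  have hp : 0 < p := by rw [hpdef]; exact one_div_pos.2 (by linarith)
  set q : ℝ := min p 1 with hqdef
  have hq0 : 0 < q := lt_min hp one_pos
  have hq1 : q ≤ 1 := min_le_right _ _
  set M : ℝ := 1 + p * C ^ (p - 1) with hMdef
  have hM0 : 0 < M := by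
    have : 0 ≤ p * C ^ (p - 1) := mul_nonneg hp.le (Real.rpow_nonneg hC.le _)
    rw [hMdef]; linarith
  have hM : ∀ a b : ℝ, 0 ≤ a → 0 ≤ b → a ≤ C → b ≤ C →
      |a ^ p - b ^ p| ≤ M * |a - b| ^ q :=
    fun a b ha hb haC hbC => aux_rpow_diff hp hC a b ha hb haC hbC
  set K : ℝ := 2 * M * (2 * C * 3 ^ β) ^ q with hKdef
  have hK0 : 0 < K := by positivity
  set u : ℝ := ((2:ℝ) ^ q)⁻¹ with hudef
  have h2q : (1:ℝ) < 2 ^ q :=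
    (Real.one_lt_rpow_iff_of_pos two_pos).2 (Or.inl ⟨one_lt_two, hq0⟩)
  have hu0 : 0 < u := by positivity
  have hu1 : u < 1 := by
    rw [hudef]
    exact inv_lt_one_of_one_lt₀ h2q
  have hCpos' : 0 < K * (1 - u)⁻¹ := mul_pos hK0 (inv_pos.2 (by linarith))
  refine ⟨K * (1 - u)⁻¹, hCpos', ?_⟩
  intro x y t ht hyx
  have hdist : dist y x < t := mem_ball.1 hyx
  -- the measure functions
  set ν : ℝ → ℝ := fun r => (σ (ball x r)).toReal with hνdef
  set μ : ℝ → ℝ := fun r => (σ (ball y r)).toReal with hμdef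
  have hfin : ∀ (z : EuclideanSpace ℝ (Fin n)) (r : ℝ), σ (ball z r) ≠ ⊤ := by
    intro z r
    rcases le_or_gt r 0 with h | h
    · rw [ball_eq_empty.2 h, measure_empty]; exact ENNReal.zero_ne_top
    · exact ((hball z r h).trans_lt ENNReal.ofReal_lt_top).ne
  have hμm : Monotone μ := fun r1 r2 h =>
    ENNReal.toReal_mono (hfin y r2) (measure_mono (ball_subset_ball h))
  have hνm : Monotone ν := fun r1 r2 h =>
    ENNReal.toReal_mono (hfin x r2) (measure_mono (ball_subset_ball h))
  have hμ0 : ∀ r, 0 ≤ μ r := fun r => ENNReal.toReal_nonneg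
  have hν0 : ∀ r, 0 ≤ ν r := fun r => ENNReal.toReal_nonneg
  have hμC : ∀ r, 0 < r → μ r ≤ C * r ^ β := fun r hr =>
    ENNReal.toReal_le_of_le_ofReal (by positivity) (hball y r hr)
  have hνC : ∀ r, 0 < r → ν r ≤ C * r ^ β := fun r hr =>
    ENNReal.toReal_le_of_le_ofReal (by positivity) (hball x r hr)
  have hd : ∀ r, t < r → |ν r - μ r| ≤ μ (r + t) - μ (r - t) := by
    intro r hr
    have h1 : ν r ≤ μ (r + t) := by
      apply ENNReal.toReal_mono (hfin y (r + t))
      apply measure_mono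
      apply ball_subset_ball'
      rw [dist_comm]
      linarith
    have h2 : μ (r - t) ≤ ν r := by
      apply ENNReal.toReal_mono (hfin x r)
      apply measure_mono
      apply ball_subset_ball'
      linarith
    have h3 : μ (r - t) ≤ μ r := hμm (by linarith)
    have h4 : μ r ≤ μ (r + t) := hμm (by linarith)
    rw [abs_le]
    constructor <;> linarith
  -- covering of (t, ∞) by dyadic intervals
  have hcov : Ioi t ⊆ ⋃ k : ℕ, Ioc ((2:ℝ)^k * t) ((2:ℝ)^(k+1) * t) := by
    intro r hr
    have hrmem : t < r := hr
    have hrt : 1 < r / t := (one_lt_div ht).2 hrmem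
    obtain ⟨m, hm⟩ := exists_mem_Ioc_zpow (by positivity : (0:ℝ) < r / t) one_lt_two
    have hm0 : 0 ≤ m := by
      by_contra h
      push_neg at h
      have hm1 : m + 1 ≤ 0 := by omega
      have : (2:ℝ) ^ (m + 1) ≤ (2:ℝ) ^ (0:ℤ) := zpow_le_zpow_right₀ one_le_two hm1
      rw [zpow_zero] at this
      have := hm.2.trans this
      linarith
    refine mem_iUnion.2 ⟨m.toNat, ?_, ?_⟩
    · have h1 : (2:ℝ) ^ (m.toNat : ℕ) = (2:ℝ) ^ m := by
        rw [← zpow_natCast, Int.toNat_of_nonneg hm0]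
      rw [h1]
      have := hm.1
      calc (2:ℝ) ^ m * t < (r / t) * t := by
            apply mul_lt_mul_of_pos_right this ht
        _ = r := by field_simp
    · have h1 : (2:ℝ) ^ (m.toNat + 1 : ℕ) = (2:ℝ) ^ (m + 1) := by
        rw [← zpow_natCast]
        congr 1
        omega
      rw [h1]
      have := hm.2
      calc r = (r / t) * t := by field_simp
        _ ≤ (2:ℝ) ^ (m + 1) * t := mul_le_mul_of_nonneg_right this ht.le
  -- main lintegral bound
  have hlint : ∫⁻ r in Ioi t,
      ENNReal.ofReal ‖((ν r / r ^ β) ^ p - (μ r / r ^ β) ^ p) * (1/r)‖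
      ≤ ENNReal.ofReal (K * (1 - u)⁻¹) := by
    have hkey : ∀ k : ℕ, ∫⁻ r in Ioc ((2:ℝ)^k * t) ((2:ℝ)^(k+1) * t),
        ENNReal.ofReal ‖((ν r / r ^ β) ^ p - (μ r / r ^ β) ^ p) * (1/r)‖
        ≤ ENNReal.ofReal (K * u ^ k) := by
      intro k
      have hAk : t ≤ (2:ℝ)^k * t :=
        le_mul_of_one_le_left ht.le (one_le_pow₀ one_le_two)
      have hAk0 : 0 < (2:ℝ)^k * t := by positivity
      have hset : ((2:ℝ)^(k+1) * t) = 2 * ((2:ℝ)^k * t) := by ring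
      have hdk : ∀ r, (2:ℝ)^k * t < r → |ν r - μ r| ≤ μ (r + t) - μ (r - t) :=
        fun r hrk => hd r (lt_of_le_of_lt hAk hrk)
      have := aux_key hβ hp hC hq0 hq1 hM0 hM hμm hμ0 hμC hνC hν0 ht hAk hdk
      rw [hset]
      refine this.trans (le_of_eq ?_)
      congr 1
      have htA : t / ((2:ℝ)^k * t) = ((2:ℝ)^k)⁻¹ := by field_simp
      have h2 : (((2:ℝ)^k)⁻¹) ^ q = u ^ k := by
        rw [Real.inv_rpow (by positivity), hudef, inv_pow]
        congr 1
        rw [← Real.rpow_natCast (2:ℝ) k, ← Real.rpow_natCast ((2:ℝ) ^ q) k,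
          ← Real.rpow_mul (by norm_num : (0:ℝ) ≤ 2), ← Real.rpow_mul (by norm_num : (0:ℝ) ≤ 2),
          mul_comm]
      rw [htA, h2]
    calc ∫⁻ r in Ioi t,
        ENNReal.ofReal ‖((ν r / r ^ β) ^ p - (μ r / r ^ β) ^ p) * (1/r)‖
        ≤ ∫⁻ r in ⋃ k : ℕ, Ioc ((2:ℝ)^k * t) ((2:ℝ)^(k+1) * t),
          ENNReal.ofReal ‖((ν r / r ^ β) ^ p - (μ r / r ^ β) ^ p) * (1/r)‖ :=
        lintegral_mono_set hcov
      _ ≤ ∑' k : ℕ, ∫⁻ r in Ioc ((2:ℝ)^k * t) ((2:ℝ)^(k+1) * t),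
          ENNReal.ofReal ‖((ν r / r ^ β) ^ p - (μ r / r ^ β) ^ p) * (1/r)‖ :=
        lintegral_iUnion_le _ _
      _ ≤ ∑' k : ℕ, ENNReal.ofReal (K * u ^ k) := ENNReal.tsum_le_tsum hkey
      _ = ENNReal.ofReal K * ∑' k : ℕ, (ENNReal.ofReal u) ^ k := by
          rw [← ENNReal.tsum_mul_left]
          congr 1
          ext k
          rw [ENNReal.ofReal_mul hK0.le, ENNReal.ofReal_pow hu0.le]
      _ = ENNReal.ofReal K * (1 - ENNReal.ofReal u)⁻¹ := by
          rw [ENNReal.tsum_geometric]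
      _ = ENNReal.ofReal (K * (1 - u)⁻¹) := by
          rw [ENNReal.ofReal_mul hK0.le]
          congr 1
          rw [← ENNReal.ofReal_one, ← ENNReal.ofReal_sub _ hu0.le,
            ENNReal.ofReal_inv_of_pos (by linarith)]
  calc |∫ r in Ioi t,
      (((σ (ball x r)).toReal / r ^ ((n : ℝ) - α * s)) ^ (1 / (s - 1)) -
        ((σ (ball y r)).toReal / r ^ ((n : ℝ) - α * s)) ^ (1 / (s - 1))) * (1 / r)|
      = ‖∫ r in Ioi t, ((ν r / r ^ β) ^ p - (μ r / r ^ β) ^ p) * (1/r)‖ := by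
        rw [Real.norm_eq_abs]
    _ ≤ (∫⁻ r in Ioi t,
        ENNReal.ofReal ‖((ν r / r ^ β) ^ p - (μ r / r ^ β) ^ p) * (1/r)‖).toReal :=
        norm_integral_le_lintegral_norm _
    _ ≤ K * (1 - u)⁻¹ := ENNReal.toReal_le_of_le_ofReal hCpos'.le hlint
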